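/- Let α ≥ β ≥ γ > 0 with α + β + γ = π and β ≥ α/2 + γ. Then sin((α+2β)/4)·sec((α−2γ)/4) ≥ sin((α+2γ)/4)·sec((α−2β)/4). -/

import Mathlib

open Real

theorem rACD_ge_rBCD_case1
    (α β γ : ℝ) (hγ : 0 < γ) (hγβ : γ ≤ β) (hβα : β ≤ α)
    (hsum : α + β + γ = Real.pi) (hcase : α / 2 + γ ≤ β) :
    Real.sin ((α + 2 * γ) / 4) / Real.cos ((α - 2 * β) / 4) ≤
      Real.sin ((α + 2 * β) / 4) / Real.cos ((α - 2 * γ) / 4) := by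
  have hβ : 0 < β := lt_of_lt_of_le hγ hγβ
  have hα : 0 < α := lt_of_lt_of_le hβ hβα
  have hαπ : α < Real.pi := by linarith
  have cβ : 0 < Real.cos ((α - 2 * β) / 4) := by
    apply Real.cos_pos_of_mem_Ioo
    constructor <;> [skip; skip] <;>
    · nlinarith [Real.pi_pos]
  have cγ : 0 < Real.cos ((α - 2 * γ) / 4) := by
    apply Real.cos_pos_of_mem_Ioo
    constructor <;>
    · nlinarith [Real.pi_pos]
  rw [div_le_div_iff₀ cβ cγ]
  have key : ∀ a b : ℝ, Real.sin a * Real.cos b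
      = (Real.sin (a + b) + Real.sin (a - b)) / 2 := by
    intro a b
    rw [Real.sin_add, Real.sin_sub]; ring
  have h1 : (α + 2 * γ) / 4 + (α - 2 * γ) / 4 = α / 2 := by ring
  have h2 : (α + 2 * γ) / 4 - (α - 2 * γ) / 4 = γ := by ring
  have h3 : (α + 2 * β) / 4 + (α - 2 * β) / 4 = α / 2 := by ring
  have h4 : (α + 2 * β) / 4 - (α - 2 * β) / 4 = β := by ring
  rw [key, key, h1, h2, h3, h4]
  have hsin : Real.sin γ ≤ Real.sin β := by
    have hd := Real.sin_sub_sin β γ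
    have c1 : 0 ≤ Real.cos ((β + γ) / 2) := by
      apply Real.cos_nonneg_of_mem_Icc
      constructor <;> nlinarith [Real.pi_pos]
    have s1 : 0 ≤ Real.sin ((β - γ) / 2) := by
      apply Real.sin_nonneg_of_nonneg_of_le_pi <;> nlinarith [Real.pi_pos]
    nlinarith
  linarith
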